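/- Every codense frame homomorphism from a zero-dimensional frame is injective. -/
import Mathlib


/-- Every codense frame homomorphism from a zero-dimensional frame is injective. -/
theorem codense_from_zeroDimensional_injective {L : Type*} {M : Type*}
    [Order.Frame L] [Order.Frame M] (f : FrameHom L M)
    (hzd : ∀ x : L, ∃ S ⊆ {y : L | ∃ z, IsCompl y z}, x = sSup S)
    (hcodense : ∀ x : L, f x = ⊤ → x = ⊤) :
    Function.Injective f := by
  have key : ∀ a b : L, f a ≤ f b → a ≤ b := by
    intro a b hab
    obtain ⟨S, hS, rfl⟩ := hzd a
    apply sSup_le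
    intro c hc
    obtain ⟨c', hcc'⟩ := hS hc
    have h1 : f (b ⊔ c') = ⊤ := by
      apply top_le_iff.mp
      have : f c ≤ f b := le_trans (OrderHomClass.mono f (le_sSup hc)) hab
      calc (⊤ : M) = f (c ⊔ c') := by rw [hcc'.sup_eq_top, map_top]
        _ = f c ⊔ f c' := map_sup f c c'
        _ ≤ f b ⊔ f c' := sup_le_sup_right this _
        _ = f (b ⊔ c') := (map_sup f b c').symm
    have h2 : b ⊔ c' = ⊤ := hcodense _ h1
    calc c = c ⊓ (b ⊔ c') := by rw [h2, inf_top_eq]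
      _ = (c ⊓ b) ⊔ (c ⊓ c') := inf_sup_left c b c'
      _ = c ⊓ b := by rw [hcc'.inf_eq_bot, sup_bot_eq]
      _ ≤ b := inf_le_right
  intro a b h
  exact le_antisymm (key a b h.le) (key b a h.ge)
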